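/- Let K be a non-real conjugacy class of a finite group G satisfying KK⁻¹ = {1} ∪ K ∪ K⁻¹. Then ⟨K⟩ is an elementary abelian p-group for an odd prime p, and if |⟨K⟩| = pⁿ then p ≡ 3 (mod 4), n is odd, and |K| = (pⁿ − 1)/2. -/

import Mathlib

open scoped Pointwise

namespace NRC

variable {G : Type*} [Group G]

lemma conj_mem_conj {x a : G} (g : G) (ha : a ∈ conjugatesOf x) :
    g * a * g⁻¹ ∈ conjugatesOf x :=
  (ha : IsConj x a).trans (isConj_iff.2 ⟨g, rfl⟩)

lemma inv_conjugatesOf (x : G) : (conjugatesOf x)⁻¹ = conjugatesOf x⁻¹ := by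
  ext y
  simp only [Set.mem_inv, conjugatesOf, Set.mem_setOf_eq, isConj_iff]
  constructor
  · rintro ⟨c, hc⟩
    refine ⟨c, ?_⟩
    have := congrArg (·⁻¹) hc
    simpa [mul_assoc] using this
  · rintro ⟨c, hc⟩
    refine ⟨c, ?_⟩
    have := congrArg (·⁻¹) hc
    simpa [mul_assoc] using this


lemma x_ne_one {G : Type*} [Group G] {x : G}
    (hnonreal : conjugatesOf x ≠ (conjugatesOf x)⁻¹) : x ≠ 1 := by
  intro hx
  apply hnonreal
  have hK1 : conjugatesOf x = {1} := by
    apply Set.eq_singleton_iff_unique_mem.2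
    refine ⟨hx ▸ mem_conjugatesOf_self, ?_⟩
    intro y hy
    exact isConj_one_right.1 (hx ▸ (hy : IsConj x y))
  rw [hK1]
  ext y; simp

lemma one_not_mem {G : Type*} [Group G] {x : G}
    (hnonreal : conjugatesOf x ≠ (conjugatesOf x)⁻¹) : (1 : G) ∉ conjugatesOf x :=
  fun h1 => x_ne_one hnonreal (isConj_one_left.1 (h1 : IsConj x 1))

lemma not_mem_inv {G : Type*} [Group G] {x : G}
    (hnonreal : conjugatesOf x ≠ (conjugatesOf x)⁻¹) :
    ∀ y ∈ conjugatesOf x, y ∉ (conjugatesOf x)⁻¹ := by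
  intro y hy hy'
  apply hnonreal
  have h1 : IsConj x y := hy
  have h2 : IsConj x y⁻¹ := by rw [Set.mem_inv] at hy'; exact hy'
  have h3 : IsConj x x⁻¹ := by
    have h4 : IsConj x⁻¹ y⁻¹ := by
      obtain ⟨c, hc⟩ := isConj_iff.1 h1
      refine isConj_iff.2 ⟨c, ?_⟩
      have := congrArg (·⁻¹) hc
      simpa [mul_assoc] using this
    exact h2.trans h4.symm
  rw [inv_conjugatesOf]
  exact h3.conjugatesOf_eq


/-- Master counting lemma: with `k = |K|`, we have `k = 2m+1` where `m` is the number of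
representations of each element of `K` as a right quotient, and the sets
`{b ∈ K | u*b ∈ K}` and `{b ∈ K | v⁻¹*b ∈ K}` have exactly `m` elements. -/
lemma counts {G : Type*} [Group G] [Fintype G] [DecidableEq G] (x : G)
    (hnonreal : conjugatesOf x ≠ (conjugatesOf x)⁻¹)
    (h : conjugatesOf x * (conjugatesOf x)⁻¹ =
      {1} ∪ conjugatesOf x ∪ (conjugatesOf x)⁻¹) :
    ∃ m : ℕ, (conjugatesOf x).toFinset.card = 2 * m + 1 ∧
      (∀ u ∈ conjugatesOf x,
        ((conjugatesOf x).toFinset.filter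
          (fun b => u * b ∈ (conjugatesOf x).toFinset)).card = m) ∧
      (∀ v ∈ conjugatesOf x,
        ((conjugatesOf x).toFinset.filter
          (fun b => v⁻¹ * b ∈ (conjugatesOf x).toFinset)).card = m) := by
  classical
  set K : Set G := conjugatesOf x with hKdef
  have hxK : x ∈ K := mem_conjugatesOf_self
  have h1K : (1 : G) ∉ K := one_not_mem hnonreal
  have hdisj : ∀ y ∈ K, y ∉ K⁻¹ := not_mem_inv hnonreal
  set Kf : Finset G := K.toFinset with hKfdef
  set k : ℕ := Kf.card with hkdef
  set c : G → ℕ :=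
    fun t => ((Kf ×ˢ Kf).filter (fun ab => ab.1 * ab.2⁻¹ = t)).card with hcdef
  have hconj : ∀ (g t : G), c t = c (g * t * g⁻¹) := by
    intro g t
    apply Finset.card_nbij' (fun ab => (g * ab.1 * g⁻¹, g * ab.2 * g⁻¹))
      (fun ab => (g⁻¹ * ab.1 * g, g⁻¹ * ab.2 * g))
    · rintro ⟨a, b⟩ hab
      simp only [Finset.mem_coe, Finset.mem_filter, Finset.mem_product, hKfdef, Set.mem_toFinset] at hab ⊢
      obtain ⟨⟨ha, hb⟩, he⟩ := hab
      refine ⟨⟨conj_mem_conj g ha, conj_mem_conj g hb⟩, ?_⟩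
      rw [← he]; group
    · rintro ⟨a, b⟩ hab
      simp only [Finset.mem_coe, Finset.mem_filter, Finset.mem_product, hKfdef, Set.mem_toFinset] at hab ⊢
      obtain ⟨⟨ha, hb⟩, he⟩ := hab
      have ht : t = g⁻¹ * (a * b⁻¹) * g := by rw [he]; group
      refine ⟨⟨?_, ?_⟩, ?_⟩
      · simpa using conj_mem_conj g⁻¹ ha
      · simpa using conj_mem_conj g⁻¹ hb
      · rw [ht]; group
    · rintro ⟨a, b⟩ _
      refine Prod.ext ?_ ?_ <;> · dsimp only; group
    · rintro ⟨a, b⟩ _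
      refine Prod.ext ?_ ?_ <;> · dsimp only; group
  have hswap : ∀ t : G, c t = c t⁻¹ := by
    intro t
    apply Finset.card_nbij' (fun ab => (ab.2, ab.1)) (fun ab => (ab.2, ab.1))
    · rintro ⟨a, b⟩ hab
      simp only [Finset.mem_coe, Finset.mem_filter, Finset.mem_product, hKfdef, Set.mem_toFinset] at hab ⊢
      obtain ⟨⟨ha, hb⟩, he⟩ := hab
      refine ⟨⟨hb, ha⟩, ?_⟩
      rw [← he]; group
    · rintro ⟨a, b⟩ hab
      simp only [Finset.mem_coe, Finset.mem_filter, Finset.mem_product, hKfdef, Set.mem_toFinset] at hab ⊢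
      obtain ⟨⟨ha, hb⟩, he⟩ := hab
      refine ⟨⟨hb, ha⟩, ?_⟩
      have ht : t = (a * b⁻¹)⁻¹ := by rw [he, inv_inv]
      rw [ht]; group
    · rintro ⟨a, b⟩ _; rfl
    · rintro ⟨a, b⟩ _; rfl
  have hval : ∀ t ∈ K, c t = c x := by
    intro t ht
    obtain ⟨g, hg⟩ := isConj_iff.1 (ht : IsConj x t)
    rw [← hg, ← hconj g x]
  have hvalinv : ∀ t ∈ K⁻¹, c t = c x := by
    intro t ht
    rw [Set.mem_inv] at ht
    rw [hswap t]
    exact hval t⁻¹ ht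
  set m : ℕ := c x with hmdef
  set Tf : Finset G := ({1} ∪ K ∪ K⁻¹ : Set G).toFinset with hTfdef
  have htotal : (Kf ×ˢ Kf).card = ∑ t ∈ Tf, c t := by
    apply Finset.card_eq_sum_card_fiberwise
    rintro ⟨a, b⟩ hab
    simp only [Finset.mem_coe, Finset.mem_product, hKfdef, Set.mem_toFinset] at hab
    rw [Finset.mem_coe, Set.mem_toFinset, ← h]
    exact Set.mul_mem_mul hab.1 (Set.inv_mem_inv.2 hab.2)
  have hTfu : Tf = ({1} : Finset G) ∪ Kf ∪ K⁻¹.toFinset := by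
    rw [hTfdef]
    rw [Set.toFinset_union, Set.toFinset_union, Set.toFinset_singleton]
  have hdisj1 : Disjoint ({1} : Finset G) Kf := by
    rw [Finset.disjoint_left]
    intro y hy hyK
    simp only [Finset.mem_singleton] at hy
    rw [hy] at hyK
    exact h1K (Set.mem_toFinset.1 hyK)
  have hdisj2 : Disjoint (({1} : Finset G) ∪ Kf) (K⁻¹.toFinset) := by
    rw [Finset.disjoint_left]
    intro y hy hyK'
    rw [Set.mem_toFinset] at hyK'
    rcases Finset.mem_union.1 hy with hy | hy
    · simp only [Finset.mem_singleton] at hy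
      rw [hy] at hyK'
      rw [Set.mem_inv, inv_one] at hyK'
      exact h1K hyK'
    · exact hdisj y (Set.mem_toFinset.1 hy) hyK'
  have hsum : ∑ t ∈ Tf, c t = c 1 + ∑ t ∈ Kf, c t + ∑ t ∈ K⁻¹.toFinset, c t := by
    rw [hTfu, Finset.sum_union hdisj2, Finset.sum_union hdisj1, Finset.sum_singleton]
  have hc1 : c 1 = k := by
    apply Finset.card_nbij' (fun ab => ab.1) (fun a => (a, a))
    · rintro ⟨a, b⟩ hab
      simp only [Finset.mem_coe, Finset.mem_filter, Finset.mem_product] at hab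
      exact hab.1.1
    · intro a ha
      simp only [Finset.mem_coe, Finset.mem_filter, Finset.mem_product]
      exact ⟨⟨ha, ha⟩, mul_inv_cancel a⟩
    · rintro ⟨a, b⟩ hab
      simp only [Finset.mem_coe, Finset.mem_filter, Finset.mem_product] at hab
      have : a = b := by
        have := hab.2
        rwa [mul_inv_eq_one] at this
      dsimp only
      rw [this]
    · intro a _; rfl
  have hKinvcard : (K⁻¹.toFinset).card = k := by
    rw [hkdef, ← Set.ncard_eq_toFinset_card', ← Set.ncard_eq_toFinset_card']
    exact Set.ncard_inv K
  have hsumK : ∑ t ∈ Kf, c t = k * m := by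
    rw [Finset.sum_congr rfl (fun t ht => hval t (Set.mem_toFinset.1 ht))]
    rw [Finset.sum_const, smul_eq_mul, hkdef]
  have hsumKinv : ∑ t ∈ K⁻¹.toFinset, c t = k * m := by
    rw [Finset.sum_congr rfl (fun t ht => hvalinv t (Set.mem_toFinset.1 ht))]
    rw [Finset.sum_const, smul_eq_mul, hKinvcard]
  have hprod : (Kf ×ˢ Kf).card = k * k := by
    rw [Finset.card_product, hkdef]
  have hsq : k * k = k + (k * m + k * m) := by
    rw [← hprod, htotal, hsum, hc1, hsumK, hsumKinv]
    ring
  have hk0 : k ≠ 0 :=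
    Finset.card_ne_zero_of_mem (Set.mem_toFinset.2 hxK)
  have hkeq : k = 2 * m + 1 := by
    have h2 : k * k = k * (2 * m + 1) := by rw [hsq]; ring
    exact Nat.eq_of_mul_eq_mul_left (Nat.pos_of_ne_zero hk0) h2
  refine ⟨m, hkeq, ?_, ?_⟩
  · intro u hu
    have : (Kf.filter (fun b => u * b ∈ Kf)).card = c u := by
      apply Finset.card_nbij' (fun b => (u * b, b)) (fun ab => ab.2)
      · intro b hb
        simp only [Finset.mem_coe, Finset.mem_filter, Finset.mem_product] at hb ⊢
        exact ⟨⟨hb.2, hb.1⟩, by group⟩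
      · rintro ⟨a, b⟩ hab
        simp only [Finset.mem_coe, Finset.mem_filter, Finset.mem_product] at hab ⊢
        obtain ⟨⟨ha, hb⟩, he⟩ := hab
        have : u * b = a := by
          rw [← he]; group
        exact ⟨hb, by rw [this]; exact ha⟩
      · intro b _; rfl
      · rintro ⟨a, b⟩ hab
        simp only [Finset.mem_coe, Finset.mem_filter, Finset.mem_product] at hab
        have : u * b = a := by
          rw [← hab.2]; group
        dsimp only
        rw [this]
    rw [this]
    exact hval u hu
  · intro v hv
    have : (Kf.filter (fun b => v⁻¹ * b ∈ Kf)).card = c v := by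
      apply Finset.card_nbij' (fun b => (b, v⁻¹ * b)) (fun ab => ab.1)
      · intro b hb
        simp only [Finset.mem_coe, Finset.mem_filter, Finset.mem_product] at hb ⊢
        exact ⟨⟨hb.1, hb.2⟩, by group⟩
      · rintro ⟨a, b⟩ hab
        simp only [Finset.mem_coe, Finset.mem_filter, Finset.mem_product] at hab ⊢
        obtain ⟨⟨ha, hb⟩, he⟩ := hab
        have : v⁻¹ * a = b := by
          rw [← he]; group
        exact ⟨ha, by rw [this]; exact hb⟩
      · intro b _; rfl
      · rintro ⟨a, b⟩ hab
        simp only [Finset.mem_coe, Finset.mem_filter, Finset.mem_product] at hab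
        have : v⁻¹ * a = b := by
          rw [← hab.2]; group
        dsimp only
        rw [this]
    rw [this]
    exact hval v hv

/-- The crux: products of two elements of the class stay in `{1} ∪ K ∪ K⁻¹`. -/
lemma key_mul [Finite G] (x : G)
    (hnonreal : conjugatesOf x ≠ (conjugatesOf x)⁻¹)
    (h : conjugatesOf x * (conjugatesOf x)⁻¹ =
      {1} ∪ conjugatesOf x ∪ (conjugatesOf x)⁻¹) :
    ∀ a ∈ conjugatesOf x, ∀ b ∈ conjugatesOf x,
      a * b ∈ ({1} ∪ conjugatesOf x ∪ (conjugatesOf x)⁻¹ : Set G) := by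
  classical
  cases nonempty_fintype G
  have hxK : x ∈ conjugatesOf x := mem_conjugatesOf_self
  have h1K : (1 : G) ∉ conjugatesOf x := one_not_mem hnonreal
  have hdisj : ∀ y ∈ conjugatesOf x, y ∉ (conjugatesOf x)⁻¹ := not_mem_inv hnonreal
  obtain ⟨m, hkeq, hA, hV⟩ := counts x hnonreal h
  -- quotients lie in T
  have hquot : ∀ {a b : G}, a ∈ conjugatesOf x → b ∈ conjugatesOf x →
      a * b⁻¹ ∈ ({1} ∪ conjugatesOf x ∪ (conjugatesOf x)⁻¹ : Set G) := by
    intro a b ha hb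
    rw [← h]
    exact Set.mul_mem_mul ha (Set.inv_mem_inv.2 hb)
  -- T is conjugation invariant
  have hconjT : ∀ (g t : G), t ∈ ({1} ∪ conjugatesOf x ∪ (conjugatesOf x)⁻¹ : Set G) →
      g * t * g⁻¹ ∈ ({1} ∪ conjugatesOf x ∪ (conjugatesOf x)⁻¹ : Set G) := by
    intro g t ht
    rcases ht with (ht | ht) | ht
    · simp only [Set.mem_singleton_iff] at ht
      rw [ht]
      left; left
      simp
    · left; right; exact conj_mem_conj g ht
    · right
      rw [Set.mem_inv] at ht ⊢
      have e : (g * t * g⁻¹)⁻¹ = g * t⁻¹ * g⁻¹ := by group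
      rw [e]
      exact conj_mem_conj g ht
  -- the chain lemma
  have hchain : ∀ {u v b : G}, u ∈ conjugatesOf x → v ∈ conjugatesOf x → b ∈ conjugatesOf x →
      u * b ∈ conjugatesOf x → v⁻¹ * b ∈ conjugatesOf x →
      u * v ∈ ({1} ∪ conjugatesOf x ∪ (conjugatesOf x)⁻¹ : Set G) := by
    intro u v b _ _ _ hub hvb
    have e : u * v = (u * b) * (v⁻¹ * b)⁻¹ := by group
    rw [e]
    exact hquot hub hvb
  -- the tournament property for left quotients
  have htour : ∀ {u v : G}, u ∈ conjugatesOf x → v ∈ conjugatesOf x → u ≠ v →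
      (u⁻¹ * v ∈ conjugatesOf x ↔ ¬(v⁻¹ * u ∈ conjugatesOf x)) := by
    intro u v hu hv hne
    have hmemT : u⁻¹ * v ∈ ({1} ∪ conjugatesOf x ∪ (conjugatesOf x)⁻¹ : Set G) := by
      have h0 : v * u⁻¹ ∈ ({1} ∪ conjugatesOf x ∪ (conjugatesOf x)⁻¹ : Set G) := hquot hv hu
      have e : u⁻¹ * v = u⁻¹ * (v * u⁻¹) * u := by group
      rw [e]
      have := hconjT u⁻¹ _ h0
      simpa using this
    have hne1 : u⁻¹ * v ≠ 1 := by
      intro h1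
      apply hne
      have := congrArg (fun w => u * w) h1
      simpa using this.symm
    have hinv_iff : v⁻¹ * u ∈ conjugatesOf x ↔ u⁻¹ * v ∈ (conjugatesOf x)⁻¹ := by
      rw [Set.mem_inv]
      have e : (u⁻¹ * v)⁻¹ = v⁻¹ * u := by group
      rw [e]
    constructor
    · intro h1 h2
      exact hdisj _ h1 (hinv_iff.1 h2)
    · intro h2
      rcases hmemT with (h3 | h3) | h3
      · simp only [Set.mem_singleton_iff] at h3
        exact absurd h3 hne1
      · exact h3
      · exact absurd (hinv_iff.2 h3) h2
  -- the partition property for bad pairs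
  have hpart : ∀ {u v : G}, u ∈ conjugatesOf x → v ∈ conjugatesOf x →
      u * v ∉ ({1} ∪ conjugatesOf x ∪ (conjugatesOf x)⁻¹ : Set G) →
      ∀ c ∈ conjugatesOf x, c ≠ v →
      (u * c ∈ conjugatesOf x ↔ ¬(v⁻¹ * c ∈ conjugatesOf x)) := by
    intro u v hu hv hbad c hc hcv
    set Kf : Finset G := (conjugatesOf x).toFinset with hKfdef
    set A : Finset G := Kf.filter (fun b => u * b ∈ Kf) with hAdef
    set V : Finset G := Kf.filter (fun b => v⁻¹ * b ∈ Kf) with hVdef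
    have hAcard : A.card = m := hA u hu
    have hVcard : V.card = m := hV v hv
    have hdisjAV : Disjoint A V := by
      rw [Finset.disjoint_left]
      intro b hbA hbV
      simp only [hAdef, hVdef, Finset.mem_filter, hKfdef, Set.mem_toFinset] at hbA hbV
      exact hbad (hchain hu hv hbA.1 hbA.2 hbV.2)
    have hvA : v ∉ A := by
      simp only [hAdef, Finset.mem_filter, hKfdef, Set.mem_toFinset]
      rintro ⟨-, h2⟩
      exact hbad (by left; right; exact h2)
    have hvV : v ∉ V := by
      simp only [hVdef, Finset.mem_filter, hKfdef, Set.mem_toFinset]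
      rintro ⟨-, h2⟩
      rw [inv_mul_cancel] at h2
      exact h1K h2
    have hsub : A ∪ V ⊆ Kf.erase v := by
      intro b hb
      rcases Finset.mem_union.1 hb with hb | hb
      · refine Finset.mem_erase.2 ⟨?_, (Finset.mem_filter.1 hb).1⟩
        intro hbv; rw [hbv] at hb; exact hvA hb
      · refine Finset.mem_erase.2 ⟨?_, (Finset.mem_filter.1 hb).1⟩
        intro hbv; rw [hbv] at hb; exact hvV hb
    have hvKf : v ∈ Kf := Set.mem_toFinset.2 hv
    have hcards : (Kf.erase v).card ≤ (A ∪ V).card := by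
      rw [Finset.card_union_of_disjoint hdisjAV, hAcard, hVcard,
        Finset.card_erase_of_mem hvKf, hkeq]
      omega
    have heq : A ∪ V = Kf.erase v := Finset.eq_of_subset_of_card_le hsub hcards
    have hcmem : c ∈ A ∪ V := by
      rw [heq]
      exact Finset.mem_erase.2 ⟨hcv, Set.mem_toFinset.2 hc⟩
    constructor
    · intro h1 h2
      have hcA : c ∈ A := by
        simp only [hAdef, Finset.mem_filter, hKfdef, Set.mem_toFinset]
        exact ⟨hc, h1⟩
      have hcV : c ∈ V := by
        simp only [hVdef, Finset.mem_filter, hKfdef, Set.mem_toFinset]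
        exact ⟨hc, h2⟩
      exact Finset.disjoint_left.1 hdisjAV hcA hcV
    · intro h2
      rcases Finset.mem_union.1 hcmem with hb | hb
      · simp only [hAdef, Finset.mem_filter, hKfdef, Set.mem_toFinset] at hb
        exact hb.2
      · simp only [hVdef, Finset.mem_filter, hKfdef, Set.mem_toFinset] at hb
        exact absurd hb.2 h2
  -- conjugate squares
  have hsqconj : ∀ {u v : G}, u ∈ conjugatesOf x → v ∈ conjugatesOf x →
      (u * u ∈ conjugatesOf x ↔ v * v ∈ conjugatesOf x) := by
    intro u v hu hv
    obtain ⟨g, hg⟩ := isConj_iff.1 ((hu : IsConj x u).symm.trans (hv : IsConj x v))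
    constructor
    · intro h1
      have e : v * v = g * (u * u) * g⁻¹ := by rw [← hg]; group
      rw [e]
      exact conj_mem_conj g h1
    · intro h1
      have e : u * u = g⁻¹ * (v * v) * g := by rw [← hg]; group
      rw [e]
      have := conj_mem_conj g⁻¹ h1
      simpa using this
  -- badness is symmetric
  have hbadsymm : ∀ {u v : G}, u * v ∉ ({1} ∪ conjugatesOf x ∪ (conjugatesOf x)⁻¹ : Set G) →
      v * u ∉ ({1} ∪ conjugatesOf x ∪ (conjugatesOf x)⁻¹ : Set G) := by
    intro u v hbad hvu
    apply hbad
    have e : u * v = v⁻¹ * (v * u) * v := by group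
    rw [e]
    have := hconjT v⁻¹ _ hvu
    simpa using this
  -- main argument
  intro a ha b hb
  by_contra hbad
  rcases eq_or_ne a b with rfl | hne
  · -- square case : a * a ∉ T
    obtain ⟨c, hc, hca⟩ : ∃ c ∈ conjugatesOf x, c ≠ a := by
      by_contra hno
      push_neg at hno
      have hKa : conjugatesOf x = {a} := Set.eq_singleton_iff_unique_mem.2 ⟨ha, hno⟩
      have haT : a ∈ conjugatesOf x * (conjugatesOf x)⁻¹ := by
        rw [h]; left; right; exact ha
      rw [hKa] at haT
      obtain ⟨s, hs, t, ht, hst⟩ := Set.mem_mul.1 haT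
      simp only [Set.mem_singleton_iff] at hs
      rw [Set.mem_inv] at ht
      simp only [Set.mem_singleton_iff] at ht
      have hta : t = a⁻¹ := by rw [← ht, inv_inv]
      rw [hs, hta, mul_inv_cancel] at hst
      rw [← hst] at ha
      exact h1K ha
    have hccbad : c * c ∉ ({1} ∪ conjugatesOf x ∪ (conjugatesOf x)⁻¹ : Set G) := by
      intro hcc
      apply hbad
      obtain ⟨g, hg⟩ := isConj_iff.1 ((ha : IsConj x a).symm.trans (hc : IsConj x c))
      have e : a * a = g⁻¹ * (c * c) * g := by rw [← hg]; group
      rw [e]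
      have := hconjT g⁻¹ _ hcc
      simpa using this
    have h1 := hpart ha ha hbad c hc hca
    have h2 := hpart hc hc hccbad a ha (Ne.symm hca)
    have h3 : a * c ∈ conjugatesOf x ↔ c * a ∈ conjugatesOf x := by
      constructor
      · intro hx1
        have e : c * a = a⁻¹ * (a * c) * a := by group
        rw [e]
        have := conj_mem_conj a⁻¹ hx1
        simpa using this
      · intro hx1
        have e : a * c = c⁻¹ * (c * a) * c := by group
        rw [e]
        have := conj_mem_conj c⁻¹ hx1
        simpa using this
    have h4 := htour ha hc (Ne.symm hca)
    tauto
  · have h1 := hpart ha hb hbad a ha hne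
    have h2 := hpart hb ha (hbadsymm hbad) b hb (Ne.symm hne)
    have h3 := htour ha hb hne
    have h4 := hsqconj ha hb
    tauto

/-- The class size is odd. -/
lemma k_odd [Finite G] (x : G)
    (hnonreal : conjugatesOf x ≠ (conjugatesOf x)⁻¹)
    (h : conjugatesOf x * (conjugatesOf x)⁻¹ =
      {1} ∪ conjugatesOf x ∪ (conjugatesOf x)⁻¹) :
    Odd (conjugatesOf x).ncard := by
  classical
  cases nonempty_fintype G
  set K : Set G := conjugatesOf x with hKdef
  have hxK : x ∈ K := mem_conjugatesOf_self
  have h1K : (1 : G) ∉ K := one_not_mem hnonreal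
  have hdisj : ∀ y ∈ K, y ∉ K⁻¹ := not_mem_inv hnonreal
  set Kf : Finset G := K.toFinset with hKfdef
  set k : ℕ := Kf.card with hkdef
  set c : G → ℕ :=
    fun t => ((Kf ×ˢ Kf).filter (fun ab => ab.1 * ab.2⁻¹ = t)).card with hcdef
  have hconj : ∀ (g t : G), c t = c (g * t * g⁻¹) := by
    intro g t
    apply Finset.card_nbij' (fun ab => (g * ab.1 * g⁻¹, g * ab.2 * g⁻¹))
      (fun ab => (g⁻¹ * ab.1 * g, g⁻¹ * ab.2 * g))
    · rintro ⟨a, b⟩ hab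
      simp only [Finset.mem_coe, Finset.mem_filter, Finset.mem_product, hKfdef, Set.mem_toFinset] at hab ⊢
      obtain ⟨⟨ha, hb⟩, he⟩ := hab
      refine ⟨⟨conj_mem_conj g ha, conj_mem_conj g hb⟩, ?_⟩
      rw [← he]; group
    · rintro ⟨a, b⟩ hab
      simp only [Finset.mem_coe, Finset.mem_filter, Finset.mem_product, hKfdef, Set.mem_toFinset] at hab ⊢
      obtain ⟨⟨ha, hb⟩, he⟩ := hab
      have ht : t = g⁻¹ * (a * b⁻¹) * g := by rw [he]; group
      refine ⟨⟨?_, ?_⟩, ?_⟩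
      · simpa using conj_mem_conj g⁻¹ ha
      · simpa using conj_mem_conj g⁻¹ hb
      · rw [ht]; group
    · rintro ⟨a, b⟩ _
      refine Prod.ext ?_ ?_ <;> · dsimp only; group
    · rintro ⟨a, b⟩ _
      refine Prod.ext ?_ ?_ <;> · dsimp only; group
  have hswap : ∀ t : G, c t = c t⁻¹ := by
    intro t
    apply Finset.card_nbij' (fun ab => (ab.2, ab.1)) (fun ab => (ab.2, ab.1))
    · rintro ⟨a, b⟩ hab
      simp only [Finset.mem_coe, Finset.mem_filter, Finset.mem_product, hKfdef, Set.mem_toFinset] at hab ⊢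
      obtain ⟨⟨ha, hb⟩, he⟩ := hab
      refine ⟨⟨hb, ha⟩, ?_⟩
      rw [← he]; group
    · rintro ⟨a, b⟩ hab
      simp only [Finset.mem_coe, Finset.mem_filter, Finset.mem_product, hKfdef, Set.mem_toFinset] at hab ⊢
      obtain ⟨⟨ha, hb⟩, he⟩ := hab
      refine ⟨⟨hb, ha⟩, ?_⟩
      have ht : t = (a * b⁻¹)⁻¹ := by rw [he, inv_inv]
      rw [ht]; group
    · rintro ⟨a, b⟩ _; rfl
    · rintro ⟨a, b⟩ _; rfl
  have hval : ∀ t ∈ K, c t = c x := by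
    intro t ht
    obtain ⟨g, hg⟩ := isConj_iff.1 (ht : IsConj x t)
    rw [← hg, ← hconj g x]
  have hvalinv : ∀ t ∈ K⁻¹, c t = c x := by
    intro t ht
    rw [Set.mem_inv] at ht
    rw [hswap t]
    exact hval t⁻¹ ht
  set m : ℕ := c x with hmdef
  set Tf : Finset G := ({1} ∪ K ∪ K⁻¹ : Set G).toFinset with hTfdef
  have htotal : (Kf ×ˢ Kf).card = ∑ t ∈ Tf, c t := by
    apply Finset.card_eq_sum_card_fiberwise
    rintro ⟨a, b⟩ hab
    simp only [Finset.mem_coe, Finset.mem_product, hKfdef, Set.mem_toFinset] at hab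
    rw [Finset.mem_coe, Set.mem_toFinset, ← h]
    exact Set.mul_mem_mul hab.1 (Set.inv_mem_inv.2 hab.2)
  have hTfu : Tf = ({1} : Finset G) ∪ Kf ∪ K⁻¹.toFinset := by
    rw [hTfdef]
    rw [Set.toFinset_union, Set.toFinset_union, Set.toFinset_singleton]
  have hdisj1 : Disjoint ({1} : Finset G) Kf := by
    rw [Finset.disjoint_left]
    intro y hy hyK
    simp only [Finset.mem_singleton] at hy
    rw [hy] at hyK
    exact h1K (Set.mem_toFinset.1 hyK)
  have hdisj2 : Disjoint (({1} : Finset G) ∪ Kf) (K⁻¹.toFinset) := by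
    rw [Finset.disjoint_left]
    intro y hy hyK'
    rw [Set.mem_toFinset] at hyK'
    rcases Finset.mem_union.1 hy with hy | hy
    · simp only [Finset.mem_singleton] at hy
      rw [hy] at hyK'
      rw [Set.mem_inv, inv_one] at hyK'
      exact h1K hyK'
    · exact hdisj y (Set.mem_toFinset.1 hy) hyK'
  have hsum : ∑ t ∈ Tf, c t = c 1 + ∑ t ∈ Kf, c t + ∑ t ∈ K⁻¹.toFinset, c t := by
    rw [hTfu, Finset.sum_union hdisj2, Finset.sum_union hdisj1, Finset.sum_singleton]
  have hc1 : c 1 = k := by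
    apply Finset.card_nbij' (fun ab => ab.1) (fun a => (a, a))
    · rintro ⟨a, b⟩ hab
      simp only [Finset.mem_coe, Finset.mem_filter, Finset.mem_product] at hab
      exact hab.1.1
    · intro a ha
      simp only [Finset.mem_coe, Finset.mem_filter, Finset.mem_product]
      exact ⟨⟨ha, ha⟩, mul_inv_cancel a⟩
    · rintro ⟨a, b⟩ hab
      simp only [Finset.mem_coe, Finset.mem_filter, Finset.mem_product] at hab
      have : a = b := by
        have := hab.2
        rwa [mul_inv_eq_one] at this
      dsimp only
      rw [this]
    · intro a _; rfl
  have hKinvcard : (K⁻¹.toFinset).card = k := by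
    rw [hkdef, ← Set.ncard_eq_toFinset_card', ← Set.ncard_eq_toFinset_card']
    exact Set.ncard_inv K
  have hsumK : ∑ t ∈ Kf, c t = k * m := by
    rw [Finset.sum_congr rfl (fun t ht => hval t (Set.mem_toFinset.1 ht))]
    rw [Finset.sum_const, smul_eq_mul, hkdef]
  have hsumKinv : ∑ t ∈ K⁻¹.toFinset, c t = k * m := by
    rw [Finset.sum_congr rfl (fun t ht => hvalinv t (Set.mem_toFinset.1 ht))]
    rw [Finset.sum_const, smul_eq_mul, hKinvcard]
  have hprod : (Kf ×ˢ Kf).card = k * k := by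
    rw [Finset.card_product, hkdef]
  have hsq : k * k = k + (k * m + k * m) := by
    rw [← hprod, htotal, hsum, hc1, hsumK, hsumKinv]
    ring
  have hk0 : k ≠ 0 :=
    Finset.card_ne_zero_of_mem (Set.mem_toFinset.2 hxK)
  have hkeq : k = 1 + 2 * m := by
    have h2 : k * k = k * (1 + 2 * m) := by rw [hsq]; ring
    exact Nat.eq_of_mul_eq_mul_left (Nat.pos_of_ne_zero hk0) h2
  have hKn : K.ncard = k := Set.ncard_eq_toFinset_card' K
  rw [hKn, hkeq]
  exact ⟨m, by ring⟩

end NRC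

open NRC in
theorem non_real_class_self_product
    {G : Type*} [Group G] [Finite G] (x : G)
    (hnonreal : conjugatesOf x ≠ (conjugatesOf x)⁻¹)
    (h : conjugatesOf x * (conjugatesOf x)⁻¹ =
      {1} ∪ conjugatesOf x ∪ (conjugatesOf x)⁻¹) :
    ∃ p n : ℕ, p.Prime ∧ Odd p ∧
      (∀ a ∈ Subgroup.closure (conjugatesOf x), ∀ b ∈ Subgroup.closure (conjugatesOf x),
        a * b = b * a) ∧
      (∀ a ∈ Subgroup.closure (conjugatesOf x), a ^ p = 1) ∧
      Nat.card (Subgroup.closure (conjugatesOf x)) = p ^ n ∧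
      p % 4 = 3 ∧ Odd n ∧
      2 * (conjugatesOf x).ncard + 1 = p ^ n := by
  classical
  set K : Set G := conjugatesOf x with hKdef
  set T : Set G := {1} ∪ K ∪ K⁻¹ with hTdef
  have hxK : x ∈ K := mem_conjugatesOf_self
  have hmemT_one : (1 : G) ∈ T := by left; left; rfl
  have hmemT_K : ∀ {a : G}, a ∈ K → a ∈ T := fun ha => by left; right; exact ha
  have hmemT_Kinv : ∀ {a : G}, a ∈ K⁻¹ → a ∈ T := fun ha => by right; exact ha
  -- x ≠ 1
  have hx1 : x ≠ 1 := by
    intro hx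
    apply hnonreal
    have hK1 : K = {1} := by
      apply Set.eq_singleton_iff_unique_mem.2
      refine ⟨hx ▸ hxK, ?_⟩
      intro y hy
      exact isConj_one_right.1 (hx ▸ (hy : IsConj x y))
    rw [hK1]
    ext y; simp
  have h1K : (1 : G) ∉ K := by
    intro h1
    exact hx1 (isConj_one_left.1 (h1 : IsConj x 1))
  have h1Kinv : (1 : G) ∉ K⁻¹ := by
    intro h1
    rw [Set.mem_inv, inv_one] at h1
    exact h1K h1
  have hdisj : ∀ y ∈ K, y ∉ K⁻¹ := by
    intro y hy hy'
    apply hnonreal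
    rw [inv_conjugatesOf]
    have h1 : IsConj x y := hy
    have h2 : IsConj x y⁻¹ := by
      rw [Set.mem_inv] at hy'; exact hy'
    have h3 : IsConj x x⁻¹ := by
      -- x ~ y, x⁻¹ ~ y⁻¹, x ~ y⁻¹
      have h4 : IsConj x⁻¹ y⁻¹ := by
        obtain ⟨c, hc⟩ := isConj_iff.1 h1
        refine isConj_iff.2 ⟨c, ?_⟩
        have := congrArg (·⁻¹) hc
        simpa [mul_assoc] using this
      exact h2.trans h4.symm
    exact h3.conjugatesOf_eq
  -- conjugation invariance of T
  have hconjT : ∀ (g t : G), t ∈ T → g * t * g⁻¹ ∈ T := by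
    intro g t ht
    rcases ht with (ht | ht) | ht
    · simp only [Set.mem_singleton_iff] at ht
      rw [ht]; simpa using hmemT_one
    · exact hmemT_K (conj_mem_conj g ht)
    · apply hmemT_Kinv
      rw [Set.mem_inv] at ht ⊢
      have : (g * t * g⁻¹)⁻¹ = g * t⁻¹ * g⁻¹ := by group
      rw [this]
      exact conj_mem_conj g ht
  -- quotients in T
  have hKK : ∀ a ∈ K, ∀ b ∈ K, a * b⁻¹ ∈ T := by
    intro a ha b hb
    show a * b⁻¹ ∈ T
    rw [← h]
    exact Set.mul_mem_mul ha (Set.inv_mem_inv.2 hb)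
  have hkey := key_mul x hnonreal h
  -- T is closed under multiplication
  have hmul : ∀ a ∈ T, ∀ b ∈ T, a * b ∈ T := by
    intro a ha b hb
    rcases ha with (ha | ha) | ha
    · simp only [Set.mem_singleton_iff] at ha; rw [ha, one_mul]; exact hb
    · rcases hb with (hb | hb) | hb
      · simp only [Set.mem_singleton_iff] at hb; rw [hb, mul_one]; exact hmemT_K ha
      · exact hkey a ha b hb
      · rw [Set.mem_inv] at hb
        have := hKK a ha b⁻¹ hb
        rwa [inv_inv] at this
    · rcases hb with (hb | hb) | hb
      · simp only [Set.mem_singleton_iff] at hb; rw [hb, mul_one]; exact hmemT_Kinv ha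
      · -- a ∈ K⁻¹, b ∈ K : a * b = a * (b * a) * a⁻¹ with b * a ... use conj:
        -- a*b = a⁻¹⁻¹ * b ; write a*b = a * (b*a) * a⁻¹, b*a ∈ K*K⁻¹? no.
        -- b * a ∈ K * K⁻¹ = T, and a*b = a * (b*a) * a⁻¹ conjugate of b*a.
        rw [Set.mem_inv] at ha
        have hba : b * a ∈ T := by
          rw [← h]
          have ha2 : a ∈ K⁻¹ := by rw [Set.mem_inv]; exact ha
          exact Set.mul_mem_mul hb ha2
        have : a * b = a * (b * a) * a⁻¹ := by group
        rw [this]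
        exact hconjT a _ hba
      · -- both in K⁻¹ : a*b = (b⁻¹ * a⁻¹)⁻¹
        rw [Set.mem_inv] at ha hb
        have hba : b⁻¹ * a⁻¹ ∈ T := hkey b⁻¹ hb a⁻¹ ha
        have hT_inv : ∀ t ∈ T, t⁻¹ ∈ T := by
          intro t ht
          rcases ht with (ht | ht) | ht
          · simp only [Set.mem_singleton_iff] at ht; rw [ht, inv_one]; exact hmemT_one
          · apply hmemT_Kinv; rw [Set.mem_inv, inv_inv]; exact ht
          · exact hmemT_K (by rwa [Set.mem_inv] at ht)
        have := hT_inv _ hba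
        rwa [mul_inv_rev, inv_inv, inv_inv] at this
  -- the subgroup with carrier T
  let N : Subgroup G :=
    { carrier := T
      one_mem' := hmemT_one
      mul_mem' := fun {a b} ha hb => hmul a ha b hb
      inv_mem' := by
        intro a ha
        rcases ha with (ha | ha) | ha
        · simp only [Set.mem_singleton_iff] at ha; rw [ha, inv_one]; exact hmemT_one
        · apply hmemT_Kinv; rw [Set.mem_inv, inv_inv]; exact ha
        · exact hmemT_K (by rwa [Set.mem_inv] at ha) }
  have hmemN : ∀ {g : G}, g ∈ N ↔ g ∈ T := fun {g} => Iff.rfl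
  have hcl : Subgroup.closure K = N := by
    apply le_antisymm
    · exact Subgroup.closure_le N |>.2 (fun y hy => hmemN.2 (hmemT_K hy))
    · intro y hy
      rcases hmemN.1 hy with (hy' | hy') | hy'
      · simp only [Set.mem_singleton_iff] at hy'; rw [hy']; exact Subgroup.one_mem _
      · exact Subgroup.subset_closure hy'
      · rw [Set.mem_inv] at hy'
        have := Subgroup.subset_closure hy'
        simpa using Subgroup.inv_mem _ this
  -- orders
  set p := orderOf x with hpdef
  have hordK : ∀ y ∈ K, orderOf y = p := by
    intro y hy
    obtain ⟨g, hg⟩ := isConj_iff.1 (hy : IsConj x y)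
    rw [← hg]
    have e : g * x * g⁻¹ = (MulAut.conj g) x := by
      simp [MulAut.conj]
    rw [e]
    exact orderOf_injective (MulAut.conj g).toMonoidHom (MulEquiv.injective _) x
  have hordT : ∀ y ∈ T, y ≠ 1 → orderOf y = p := by
    intro y hy hy1
    rcases hy with (hy | hy) | hy
    · simp only [Set.mem_singleton_iff] at hy; exact absurd hy hy1
    · exact hordK y hy
    · rw [Set.mem_inv] at hy
      rw [← orderOf_inv]
      exact hordK y⁻¹ hy
  have hp1 : p ≠ 1 := fun hp => hx1 (orderOf_eq_one_iff.1 hp)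
  have hp0 : p ≠ 0 := by
    have : 0 < p := orderOf_pos x
    omega
  have hprime : p.Prime := by
    obtain ⟨q, hq, hqd⟩ := Nat.exists_prime_and_dvd hp1
    have hdvd : p / q ∣ p := Nat.div_dvd_of_dvd hqd
    have hyo : orderOf (x ^ (p / q)) = q := orderOf_pow_orderOf_div hp0 hqd
    have hyN : x ^ (p / q) ∈ Subgroup.closure K :=
      Subgroup.pow_mem _ (Subgroup.subset_closure hxK) _
    rw [hcl] at hyN
    have hyT : x ^ (p / q) ∈ T := hmemN.1 hyN
    have hy1 : x ^ (p / q) ≠ 1 := by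
      intro h1
      rw [h1, orderOf_one] at hyo
      exact hq.one_lt.ne' hyo.symm
    have hqp := hordT _ hyT hy1
    rw [hyo] at hqp
    rwa [← hqp]
  have hfact : Fact p.Prime := ⟨hprime⟩
  have hpodd : Odd p := by
    refine hprime.odd_of_ne_two ?_
    intro hp2
    apply hnonreal
    have hxx : x⁻¹ = x := by
      have h2 : x * x = 1 := by
        have : x ^ 2 = 1 := by rw [← hp2, hpdef]; exact pow_orderOf_eq_one x
        rw [← pow_two]; exact this
      exact inv_eq_of_mul_eq_one_left h2
    rw [inv_conjugatesOf, hxx]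
  -- N is a p-group
  have hmemTN : ∀ y : N, (y : G) ∈ T := fun y => hmemN.1 y.2
  have hxN : x ∈ N := hmemN.2 (hmemT_K hxK)
  have hpow1 : ∀ a ∈ Subgroup.closure K, a ^ p = 1 := by
    intro a ha
    rw [hcl] at ha
    rcases eq_or_ne a 1 with h1 | h1
    · rw [h1, one_pow]
    · rw [← hordT a (hmemN.1 ha) h1]; exact pow_orderOf_eq_one a
  have hPG : IsPGroup p N := by
    intro g
    refine ⟨1, ?_⟩
    have hg1 : (g : G) ^ p = 1 := by
      rcases eq_or_ne (g : G) 1 with h1 | h1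
      · rw [h1, one_pow]
      · rw [← hordT _ (hmemTN g) h1]; exact pow_orderOf_eq_one _
    ext
    simpa [pow_one] using hg1
  haveI hNnontriv : Nontrivial N :=
    ⟨⟨⟨x, hxN⟩, 1, fun hh => hx1 (Subtype.ext_iff.1 hh)⟩⟩
  haveI hcn : Nontrivial (Subgroup.center N) := hPG.center_nontrivial
  obtain ⟨z1, hz1⟩ := exists_ne (1 : Subgroup.center N)
  set z : G := ((z1 : N) : G) with hzdef
  have hzT : z ∈ T := hmemTN _
  have hz_ne1 : z ≠ 1 := by
    intro hzz
    exact hz1 (Subtype.ext (Subtype.ext hzz))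
  have hzcomm : ∀ t ∈ T, z * t = t * z := by
    intro t ht
    have htN : t ∈ N := hmemN.2 ht
    have h0 := Subgroup.mem_center_iff.1 z1.2 ⟨t, htN⟩
    have h1 := congrArg (fun w : N => (w : G)) h0
    simpa using h1.symm
  obtain ⟨z₀, hz₀K, hz₀comm⟩ : ∃ z₀ ∈ K, ∀ t ∈ T, z₀ * t = t * z₀ := by
    rcases hzT with (hz | hz) | hz
    · simp only [Set.mem_singleton_iff] at hz; exact absurd hz hz_ne1
    · exact ⟨z, hz, hzcomm⟩
    · refine ⟨z⁻¹, by rwa [Set.mem_inv] at hz, ?_⟩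
      intro t ht
      have hc : Commute z t := hzcomm t ht
      exact hc.inv_left.eq
  have hKcommT : ∀ a ∈ K, ∀ t ∈ T, a * t = t * a := by
    intro a ha t ht
    obtain ⟨g, hg⟩ := isConj_iff.1 ((hz₀K : IsConj x z₀).symm.trans (ha : IsConj x a))
    have h1 : g⁻¹ * t * g ∈ T := by
      have := hconjT g⁻¹ t ht
      simpa using this
    have h2 := hz₀comm _ h1
    have e1 : a * t = g * (z₀ * (g⁻¹ * t * g)) * g⁻¹ := by rw [← hg]; group
    have e2 : g * ((g⁻¹ * t * g) * z₀) * g⁻¹ = t * a := by rw [← hg]; group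
    rw [e1, h2, e2]
  have hTcomm : ∀ s ∈ T, ∀ t ∈ T, s * t = t * s := by
    intro s hs t ht
    rcases hs with (hs | hs) | hs
    · simp only [Set.mem_singleton_iff] at hs; rw [hs, one_mul, mul_one]
    · exact hKcommT s hs t ht
    · rw [Set.mem_inv] at hs
      have hc : Commute s⁻¹ t := hKcommT s⁻¹ hs t ht
      have := hc.inv_left.eq
      simpa using this
  -- cardinalities
  have hcardN : (T.ncard : ℕ) = Nat.card N := by
    rw [← Nat.card_coe_set_eq]
    rfl
  have hKinv_card : (K⁻¹).ncard = K.ncard := Set.ncard_inv K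
  have hd1 : Disjoint ({1} : Set G) K := by
    rw [Set.disjoint_left]
    intro y hy hyK
    simp only [Set.mem_singleton_iff] at hy
    rw [hy] at hyK
    exact h1K hyK
  have hd2 : Disjoint (({1} : Set G) ∪ K) (K⁻¹) := by
    rw [Set.disjoint_left]
    intro y hy hyK'
    rcases hy with hy | hy
    · simp only [Set.mem_singleton_iff] at hy
      rw [hy] at hyK'
      exact h1Kinv hyK'
    · exact hdisj y hy hyK'
  have hTcard : T.ncard = 2 * K.ncard + 1 := by
    rw [hTdef]
    rw [Set.ncard_union_eq hd2 (Set.toFinite _) (Set.toFinite _),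
      Set.ncard_union_eq hd1 (Set.toFinite _) (Set.toFinite _),
      Set.ncard_singleton, hKinv_card]
    ring
  obtain ⟨n, hn⟩ := (IsPGroup.iff_card (p := p) (G := N)).1 hPG
  have h2k : 2 * K.ncard + 1 = p ^ n := by
    rw [← hTcard, hcardN, hn]
  -- parity
  obtain ⟨j, hj⟩ : Odd (K.ncard) := k_odd x hnonreal h
  have hmod : p ^ n % 4 = 3 := by omega
  have hp2 : p % 2 = 1 := by
    rcases hpodd with ⟨i, hi⟩; omega
  have hp4 : p % 4 = 3 := by
    have h24 : p % 4 % 2 = p % 2 := Nat.mod_mod_of_dvd p (by norm_num)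
    have hcase : p % 4 = 1 ∨ p % 4 = 3 := by omega
    rcases hcase with h1 | h3
    · exfalso
      have : p ^ n % 4 = 1 % 4 := by
        rw [Nat.pow_mod, h1, one_pow]
      omega
    · exact h3
  have hnodd : Odd n := by
    rcases Nat.even_or_odd n with he | ho
    · exfalso
      obtain ⟨i, hi⟩ := he
      have hpp : p ^ 2 % 4 = 1 := by
        rw [Nat.pow_mod, hp4]
      have : p ^ n % 4 = 1 % 4 := by
        rw [hi, ← two_mul, pow_mul, Nat.pow_mod, hpp, one_pow]
      omega
    · exact ho
  refine ⟨p, n, hprime, hpodd, ?_, hpow1, ?_, hp4, hnodd, h2k⟩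
  · intro a ha b hb
    rw [hcl] at ha hb
    exact hTcomm a (hmemN.1 ha) b (hmemN.1 hb)
  · rw [hcl]; exact hn
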